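/- Let γ > 0, λ > 0, c > 0, and let a < b be real numbers with (c/λ)^{1/(1+γ)} ≥ b − a. Then ν_γ({(x,y) : x ≤ a, y ≥ b, c > λ(y−x)^{1+γ}}) = c/(λ(γ+1)) − (1/γ)·(b−a)·(c/λ)^{γ/(1+γ)} + (1/(γ(γ+1)))·(b−a)^{γ+1}. -/

import Mathlib

open MeasureTheory Filter Set
open scoped ENNReal Topology

/-- The measure `ν_γ` on `ℝ × ℝ`: `ν_γ(A) = ∬_A |x - y|^(γ-1) dy dx`. -/
noncomputable def nuG (γ : ℝ) (A : Set (ℝ × ℝ)) : ℝ≥0∞ :=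
  ∫⁻ p in A, ENNReal.ofReal (|p.1 - p.2| ^ (γ - 1))

/-- The set `E_{γ,λ}(f,Ω) = {(x,y) ∈ Ω × Ω : |f(x) - f(y)| > λ |x - y|^(1+γ)}`. -/
def EG (γ lam : ℝ) (f : ℝ → ℝ) (Ω : Set ℝ) : Set (ℝ × ℝ) :=
  {p | p.1 ∈ Ω ∧ p.2 ∈ Ω ∧ lam * |p.1 - p.2| ^ (1 + γ) < |f p.1 - f p.2|}

/-- The functional `F_{γ,λ}(f,Ω) = λ ν_γ(E_{γ,λ}(f,Ω))`. -/
noncomputable def FG (γ lam : ℝ) (f : ℝ → ℝ) (Ω : Set ℝ) : ℝ≥0∞ :=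
  ENNReal.ofReal lam * nuG γ (EG γ lam f Ω)


/-- Let `γ, λ > 0`, `c > 0`, and `a < b` with `(c/λ)^(1/(1+γ)) ≥ b - a`. Then
`ν_γ({(x,y) : x ≤ a, y ≥ b, c > λ(y-x)^(1+γ)})
  = c/(λ(γ+1)) - (1/γ)(b-a)(c/λ)^(γ/(1+γ)) + (1/(γ(γ+1)))(b-a)^(γ+1)`. -/
theorem stmt8 (γ lam c a b : ℝ) (hγ : 0 < γ) (hlam : 0 < lam) (hc : 0 < c)
    (hab : a < b) (h : b - a ≤ (c / lam) ^ (1 / (1 + γ))) :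
    nuG γ {p : ℝ × ℝ | p.1 ≤ a ∧ b ≤ p.2 ∧ lam * (p.2 - p.1) ^ (1 + γ) < c}
      = ENNReal.ofReal (c / (lam * (γ + 1))
          - (1 / γ) * (b - a) * (c / lam) ^ (γ / (1 + γ))
          + (1 / (γ * (γ + 1))) * (b - a) ^ (γ + 1)) := by
  have h1γ : (0:ℝ) < 1 + γ := by linarith
  set r := c / lam with hr_def
  have hr : 0 < r := div_pos hc hlam
  set R := r ^ (1/(1+γ)) with hR_def
  have hR : 0 < R := Real.rpow_pos_of_pos hr _
  have hRp : R ^ (1+γ) = r := by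
    rw [hR_def, ← Real.rpow_mul hr.le, one_div_mul_cancel h1γ.ne', Real.rpow_one]
  have hRγ : R ^ γ = r ^ (γ/(1+γ)) := by
    rw [hR_def, ← Real.rpow_mul hr.le]
    congr 1
    field_simp
  have habR : b - a ≤ R := h
  have hbRa : b - R ≤ a := by linarith
  -- the set as a "slice" set
  have hset : {p : ℝ × ℝ | p.1 ≤ a ∧ b ≤ p.2 ∧ lam * (p.2 - p.1) ^ (1 + γ) < c}
      = {p : ℝ × ℝ | p.1 ≤ a ∧ b ≤ p.2 ∧ p.2 < p.1 + R} := by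
    ext ⟨x, y⟩
    simp only [mem_setOf_eq]
    refine and_congr_right fun hx => and_congr_right fun hy => ?_
    have hyx : (0:ℝ) ≤ y - x := by linarith
    rw [mul_comm, ← lt_div_iff₀ hlam, ← hr_def, ← hRp,
      Real.rpow_lt_rpow_iff hyx hR.le h1γ]
    constructor <;> intro hh <;> linarith
  have hmeasT : MeasurableSet {p : ℝ × ℝ | p.1 ≤ a ∧ b ≤ p.2 ∧ p.2 < p.1 + R} := by
    refine MeasurableSet.inter ?_ (MeasurableSet.inter ?_ ?_)
    · exact measurable_fst measurableSet_Iic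
    · exact measurable_snd measurableSet_Ici
    · exact measurableSet_lt measurable_snd (measurable_fst.add_const R)
  have hfmeas : Measurable fun p : ℝ × ℝ => ENNReal.ofReal ((p.2 - p.1) ^ (γ - 1)) :=
    ENNReal.measurable_ofReal.comp ((measurable_snd.sub measurable_fst).pow measurable_const)
  -- rewrite the integrand
  have step1 : nuG γ {p : ℝ × ℝ | p.1 ≤ a ∧ b ≤ p.2 ∧ lam * (p.2 - p.1) ^ (1 + γ) < c}
      = ∫⁻ p in {p : ℝ × ℝ | p.1 ≤ a ∧ b ≤ p.2 ∧ p.2 < p.1 + R},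
          ENNReal.ofReal ((p.2 - p.1) ^ (γ - 1)) := by
    rw [nuG, hset]
    refine setLIntegral_congr_fun hmeasT (fun p hp => ?_)
    obtain ⟨h1, h2, h3⟩ := hp
    congr 1
    rw [abs_of_nonpos (by linarith : p.1 - p.2 ≤ 0), neg_sub]
  -- Fubini
  have step2 : (∫⁻ p in {p : ℝ × ℝ | p.1 ≤ a ∧ b ≤ p.2 ∧ p.2 < p.1 + R},
          ENNReal.ofReal ((p.2 - p.1) ^ (γ - 1)))
      = ∫⁻ x in Iic a, ∫⁻ y in Ico b (x + R), ENNReal.ofReal ((y - x) ^ (γ - 1)) := by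
    rw [← lintegral_indicator hmeasT, Measure.volume_eq_prod ℝ ℝ,
      lintegral_prod _ ((hfmeas.indicator hmeasT).aemeasurable)]
    rw [← lintegral_indicator measurableSet_Iic]
    congr 1
    funext x
    by_cases hx : x ≤ a
    · have : ∀ y : ℝ, ({p : ℝ × ℝ | p.1 ≤ a ∧ b ≤ p.2 ∧ p.2 < p.1 + R}.indicator
          (fun p => ENNReal.ofReal ((p.2 - p.1) ^ (γ - 1))) (x, y))
          = (Ico b (x + R)).indicator (fun y => ENNReal.ofReal ((y - x) ^ (γ - 1))) y := by
        intro y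
        simp only [indicator_apply, mem_setOf_eq, mem_Ico, hx, true_and]
      simp only [this]
      rw [lintegral_indicator measurableSet_Ico,
        indicator_of_mem (mem_Iic.2 hx)]
    · have : ∀ y : ℝ, ({p : ℝ × ℝ | p.1 ≤ a ∧ b ≤ p.2 ∧ p.2 < p.1 + R}.indicator
          (fun p => ENNReal.ofReal ((p.2 - p.1) ^ (γ - 1))) (x, y)) = 0 := by
        intro y
        exact indicator_of_notMem (fun hmem => hx hmem.1) _
      simp only [this, lintegral_const, zero_mul,
        indicator_of_notMem (fun hmem => hx (mem_Iic.1 hmem))]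
  -- inner integral
  have key : ∀ x ∈ Ioc (b - R) a,
      (∫⁻ y in Ico b (x + R), ENNReal.ofReal ((y - x) ^ (γ - 1)))
        = ENNReal.ofReal ((R ^ γ - (b - x) ^ γ) / γ) := by
    intro x hx
    obtain ⟨hx1, hx2⟩ := hx
    have hxb : x < b := lt_of_le_of_lt hx2 hab
    have hbxR : b ≤ x + R := by linarith
    rw [setLIntegral_congr Ico_ae_eq_Ioc]
    have hcont : ContinuousOn (fun y => (y - x) ^ (γ - 1)) (Icc b (x + R)) := by
      intro y hy
      have : y - x ≠ 0 := by have := hy.1; intro hz; nlinarith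
      exact ((continuousAt_id.sub continuousAt_const).rpow_const
        (Or.inl this)).continuousWithinAt
    have hint : IntegrableOn (fun y => (y - x) ^ (γ - 1)) (Ioc b (x + R)) volume :=
      (hcont.integrableOn_Icc).mono_set Ioc_subset_Icc_self
    have hnn : 0 ≤ᵐ[volume.restrict (Ioc b (x + R))] fun y => (y - x) ^ (γ - 1) := by
      refine (ae_restrict_iff' measurableSet_Ioc).2 (ae_of_all _ fun y hy => ?_)
      exact Real.rpow_nonneg (by linarith [hy.1]) _
    rw [← ofReal_integral_eq_lintegral_ofReal hint hnn]
    congr 1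
    rw [← intervalIntegral.integral_of_le hbxR,
      intervalIntegral.integral_comp_sub_right (fun u => u ^ (γ - 1)) x,
      add_sub_cancel_left, integral_rpow (Or.inl (by linarith : (-1:ℝ) < γ - 1))]
    have hγ1 : γ - 1 + 1 = γ := by ring
    rw [hγ1]
  -- split the outer integral
  have step3 : (∫⁻ x in Iic a, ∫⁻ y in Ico b (x + R), ENNReal.ofReal ((y - x) ^ (γ - 1)))
      = ∫⁻ x in Ioc (b - R) a, ENNReal.ofReal ((R ^ γ - (b - x) ^ γ) / γ) := by
    rw [← Iic_union_Ioc_eq_Iic hbRa,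
      lintegral_union measurableSet_Ioc (Iic_disjoint_Ioc le_rfl)]
    have hz : (∫⁻ x in Iic (b - R), ∫⁻ y in Ico b (x + R),
        ENNReal.ofReal ((y - x) ^ (γ - 1))) = 0 := by
      rw [setLIntegral_congr_fun measurableSet_Iic
        (fun x (hx : x ≤ b - R) => ?_), lintegral_zero]
      rw [Ico_eq_empty (by intro hlt; linarith), Measure.restrict_empty,
        lintegral_zero_measure]
    rw [hz, zero_add]
    exact setLIntegral_congr_fun measurableSet_Ioc key
  -- compute the remaining integral
  have hcont2 : ContinuousOn (fun x => (R ^ γ - (b - x) ^ γ) / γ) (Icc (b - R) a) := by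
    refine ContinuousOn.div_const ?_ γ
    refine continuousOn_const.sub ?_
    exact ((continuous_const.sub continuous_id).rpow_const
      fun x => Or.inr hγ.le).continuousOn
  have hint2 : IntegrableOn (fun x => (R ^ γ - (b - x) ^ γ) / γ) (Ioc (b - R) a) volume :=
    (hcont2.integrableOn_Icc).mono_set Ioc_subset_Icc_self
  have hnn2 : 0 ≤ᵐ[volume.restrict (Ioc (b - R) a)]
      fun x => (R ^ γ - (b - x) ^ γ) / γ := by
    refine (ae_restrict_iff' measurableSet_Ioc).2 (ae_of_all _ fun x hx => ?_)
    have h1 : (0:ℝ) ≤ b - x := by linarith [hx.2, hab.le]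
    have h2 : b - x ≤ R := by linarith [hx.1]
    have := Real.rpow_le_rpow h1 h2 hγ.le
    have : (0:ℝ) ≤ R ^ γ - (b - x) ^ γ := by linarith
    positivity
  have step4 : (∫⁻ x in Ioc (b - R) a, ENNReal.ofReal ((R ^ γ - (b - x) ^ γ) / γ))
      = ENNReal.ofReal (∫ x in (b - R)..a, (R ^ γ - (b - x) ^ γ) / γ) := by
    rw [← ofReal_integral_eq_lintegral_ofReal hint2 hnn2,
      intervalIntegral.integral_of_le hbRa]
  -- value of the real integral
  have I2 : (∫ x in (b - R)..a, (b - x) ^ γ)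
      = (R ^ (γ + 1) - (b - a) ^ (γ + 1)) / (γ + 1) := by
    rw [intervalIntegral.integral_comp_sub_left (fun u => u ^ γ) b, sub_sub_cancel,
      integral_rpow (Or.inl (by linarith : (-1:ℝ) < γ))]
  have hii : IntervalIntegrable (fun x => (b - x) ^ γ) volume (b - R) a := by
    apply Continuous.intervalIntegrable
    exact (continuous_const.sub continuous_id).rpow_const fun x => Or.inr hγ.le
  have I1 : (∫ x in (b - R)..a, (R ^ γ - (b - x) ^ γ) / γ)
      = (R ^ γ * (a - (b - R)) - (R ^ (γ + 1) - (b - a) ^ (γ + 1)) / (γ + 1)) / γ := by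
    simp only [div_eq_mul_inv]
    rw [intervalIntegral.integral_mul_const,
      intervalIntegral.integral_sub (intervalIntegrable_const) hii,
      intervalIntegral.integral_const, I2]
    simp only [smul_eq_mul, div_eq_mul_inv]
    ring
  -- final algebraic identity
  have e2 : R ^ γ * R = r := by
    rw [← Real.rpow_add_one hR.ne' γ, add_comm γ 1, hRp]
  have e3 : c / (lam * (γ + 1)) = r / (γ + 1) := by
    rw [hr_def, div_div]
  have hγ1 : γ + 1 ≠ 0 := by linarith
  have hfin : (R ^ γ * (a - (b - R)) - (R ^ (γ + 1) - (b - a) ^ (γ + 1)) / (γ + 1)) / γ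
      = c / (lam * (γ + 1)) - 1 / γ * (b - a) * r ^ (γ / (1 + γ))
        + 1 / (γ * (γ + 1)) * (b - a) ^ (γ + 1) := by
    have e1 : R ^ (γ + 1) = r := by rw [add_comm γ 1, hRp]
    have e4 : R ^ γ * (a - (b - R)) = R ^ γ * (a - b) + r := by rw [← e2]; ring
    rw [e1, e4, e3, ← hRγ]
    field_simp
    ring
  rw [step1, step2, step3, step4, I1, hfin]
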